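/- arXiv:2509.06527 — 3 statements merged into one kernel-verified Lean document; each statement's English description precedes it below -/
import Mathlib

section
/- Let p be a prime and A a Noetherian commutative ring such that p is a nonzerodivisor on A, p lies in the Jacobson radical of A, and A/pA is reduced. Then every Frobenius lift φ : A → A is injective. -/
/-- **Injectivity of Frobenius lifts.**
Let `p` be a prime and `A` a Noetherian commutative ring such that `p` is a nonzerodivisor
on `A`, `p` lies in the Jacobson radical of `A`, and `A/pA` is reduced.
Then every Frobenius lift `φ : A → A` (a ring homomorphism with `φ a ≡ a ^ p (mod pA)`
for all `a`) is injective. -/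
theorem frobeniusLift_injective {A : Type*} [CommRing A] [IsNoetherianRing A]
    (p : ℕ) (hp : p.Prime)
    (hnzd : (p : A) ∈ nonZeroDivisors A)
    (hjac : (p : A) ∈ Ideal.jacobson (⊥ : Ideal A))
    (hred : IsReduced (A ⧸ Ideal.span {(p : A)}))
    (φ : A →+* A) (hφ : ∀ a : A, φ a - a ^ p ∈ Ideal.span {(p : A)}) :
    Function.Injective φ := by
  set I : Ideal A := Ideal.span {(p : A)} with hI
  set N : Ideal A := RingHom.ker φ with hN
  have hIjac : I ≤ Ideal.jacobson (⊥ : Ideal A) := by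
    rw [hI, Ideal.span_le, Set.singleton_subset_iff]
    exact hjac
  have hNle : N ≤ I • N := by
    intro a ha
    have hker : φ a = 0 := ha
    -- a ^ p ∈ I
    have hap : a ^ p ∈ I := by
      have := hφ a
      rw [hker, zero_sub] at this
      simpa using I.neg_mem this
    -- a mod p nilpotent hence zero
    have haI : a ∈ I := by
      have h0 : (Ideal.Quotient.mk I a) ^ p = 0 := by
        rw [← map_pow, Ideal.Quotient.eq_zero_iff_mem]
        exact hap
      have : IsNilpotent (Ideal.Quotient.mk I a) := ⟨p, h0⟩
      have := (hI ▸ hred).eq_zero _ this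
      rwa [Ideal.Quotient.eq_zero_iff_mem] at this
    obtain ⟨b, hb⟩ := Ideal.mem_span_singleton'.mp haI
    have hφb : b ∈ N := by
      have : (p : A) * φ b = 0 := by
        have : φ ((p : A) * b) = 0 := by rw [mul_comm, hb]; exact hker
        simpa [map_mul, map_natCast, mul_comm] using this
      exact hnzd.2 _ (by rwa [mul_comm] at this)
    rw [← hb, mul_comm]
    exact Submodule.smul_mem_smul (Ideal.mem_span_singleton_self _) hφb
  have hfg : N.FG := IsNoetherian.noetherian N
  have : N = ⊥ :=
    Submodule.eq_bot_of_le_smul_of_le_jacobson_bot I N hfg hNle hIjac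
  rwa [hN, ← RingHom.injective_iff_ker_eq_bot] at this
end

section
/- Let p be a prime and let R = ℤ_p⟦x⟧/(px), the quotient of the power series ring over the p-adic integers by the principal ideal generated by p·x. Then R admits no p-derivation: there is no function δ : R → R with δ(0) = δ(1) = 0 satisfying δ(ab) = a^p δ(b) + b^p δ(a) + p δ(a) δ(b) for all a, b ∈ R, and δ(a+b) = δ(a) + δ(b) − Σ_{i=1}^{p−1} c_i a^i b^{p−i} for all a, b ∈ R, where c_i denotes the integer binom(p,i)/p. In particular, R carries no δ-ring structure. -/
/-- The ring `ℤ_p⟦x⟧/(px)`: the quotient of the power series ring over the `p`-adic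
integers by the principal ideal generated by `p·x`. -/
def PadicSeriesQuot (p : ℕ) [Fact p.Prime] : Type :=
  PowerSeries ℤ_[p] ⧸ Ideal.span {(p : PowerSeries ℤ_[p]) * PowerSeries.X}

noncomputable instance (p : ℕ) [Fact p.Prime] : CommRing (PadicSeriesQuot p) :=
  inferInstanceAs
    (CommRing (PowerSeries ℤ_[p] ⧸ Ideal.span {(p : PowerSeries ℤ_[p]) * PowerSeries.X}))

/-- Integer binomial identity: `(x+1)^p = x^p + 1 + ∑_{0<i<p} (C(p,i)/p)·p·x^i`. -/
lemma choose_sum_key (p : ℕ) (hp : p.Prime) (x : ℤ) :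
    (x + 1) ^ p = x ^ p + 1 + ∑ i ∈ Finset.Ioo 0 p, ((p.choose i / p : ℕ) : ℤ) * p * x ^ i := by
  rw [add_pow, Finset.range_add_one, Finset.sum_insert (by simp), Finset.range_eq_Ico,
    ← Finset.Ioo_insert_left hp.pos, Finset.sum_insert (by simp)]
  simp only [one_pow, mul_one, Nat.choose_self, Nat.cast_one, pow_zero, Nat.choose_zero_right,
    Nat.sub_zero, one_mul]
  have key : ∀ i ∈ Finset.Ioo 0 p, x ^ i * (p.choose i : ℤ) =
      ((p.choose i / p : ℕ) : ℤ) * p * x ^ i := by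
    intro i hi
    simp only [Finset.mem_Ioo] at hi
    have hd : p ∣ p.choose i := hp.dvd_choose_self (by omega) hi.2
    have h2 : ((p.choose i / p) * p : ℕ) = p.choose i := Nat.div_mul_cancel hd
    conv_lhs => rw [← h2, Nat.cast_mul]
    ring
  rw [Finset.sum_congr rfl key]
  ring

/-- **`ℤ_p⟦x⟧/(px)` carries no δ-ring structure.** -/
theorem no_delta_structure_on_padic_quotient (p : ℕ) [hp : Fact p.Prime] :
    ¬ ∃ δ : PadicSeriesQuot p → PadicSeriesQuot p,
      δ 0 = 0 ∧ δ 1 = 0 ∧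
      (∀ a b : PadicSeriesQuot p,
        δ (a * b) = a ^ p * δ b + b ^ p * δ a + (p : PadicSeriesQuot p) * δ a * δ b) ∧
      (∀ a b : PadicSeriesQuot p,
        δ (a + b) = δ a + δ b -
          ∑ i ∈ Finset.Ioo 0 p,
            ((p.choose i / p : ℕ) : PadicSeriesQuot p) * a ^ i * b ^ (p - i)) := by
  rintro ⟨δ, h0, h1, hmul, hadd⟩
  -- Step 1: δ on natural numbers is an integer c with p*c = n - n^p.
  have claim : ∀ n : ℕ, ∃ c : ℤ, δ ((n : ℕ) : PadicSeriesQuot p) = (c : PadicSeriesQuot p) ∧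
      (p : ℤ) * c = (n : ℤ) - (n : ℤ) ^ p := by
    intro n
    induction n with
    | zero => exact ⟨0, by simpa using h0, by simp [zero_pow hp.out.ne_zero]⟩
    | succ n ih =>
      obtain ⟨c, hc, hpc⟩ := ih
      refine ⟨c - ∑ i ∈ Finset.Ioo 0 p, ((p.choose i / p : ℕ) : ℤ) * (n : ℤ) ^ i, ?_, ?_⟩
      · have h := hadd ((n : ℕ) : PadicSeriesQuot p) 1
        rw [h1, add_zero, hc] at h
        rw [Nat.cast_add, Nat.cast_one, h, Int.cast_sub, Int.cast_sum]
        congr 1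
        refine Finset.sum_congr rfl fun i _ => ?_
        rw [Int.cast_mul, Int.cast_natCast, Int.cast_pow, Int.cast_natCast, one_pow, mul_one]
      · have hk := choose_sum_key p hp.out (n : ℤ)
        have hS : ∑ i ∈ Finset.Ioo 0 p, ((p.choose i / p : ℕ) : ℤ) * (p : ℤ) * (n : ℤ) ^ i =
            (p : ℤ) * ∑ i ∈ Finset.Ioo 0 p, ((p.choose i / p : ℕ) : ℤ) * (n : ℤ) ^ i := by
          rw [Finset.mul_sum]
          exact Finset.sum_congr rfl fun i _ => by ring
        rw [Nat.cast_add, Nat.cast_one]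
        linear_combination hpc + hk + hS
  -- Step 2: δ(p) = 1 - p^(p-1).
  obtain ⟨c, hc, hpc⟩ := claim p
  have hp0 : ((p : ℕ) : ℤ) ≠ 0 := Int.natCast_ne_zero.mpr hp.out.ne_zero
  have e1 : p = (p - 1) + 1 := by omega
  have e2 : p - 1 = (p - 2) + 1 := by have := hp.out.two_le; omega
  have hc' : c = 1 - (p : ℤ) ^ (p - 1) := by
    apply mul_left_cancel₀ hp0
    rw [hpc]
    have hpp : ((p : ℕ) : ℤ) ^ p = (p : ℤ) * (p : ℤ) ^ (p - 1) := by
      conv_lhs => rw [e1]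
      rw [pow_succ, ← e1]
      ring
    rw [hpp]; ring
  subst hc'
  have hcR : δ ((p : ℕ) : PadicSeriesQuot p) =
      1 - ((p : ℕ) : PadicSeriesQuot p) ^ (p - 1) := by
    rw [hc]; push_cast; ring
  -- Step 3: work with x = image of X.
  set x : PadicSeriesQuot p :=
    Ideal.Quotient.mk (Ideal.span {(p : PowerSeries ℤ_[p]) * PowerSeries.X}) PowerSeries.X with hxdef
  have hpx : ((p : ℕ) : PadicSeriesQuot p) * x = 0 := by
    have h := Ideal.Quotient.eq_zero_iff_mem.mpr
      (Ideal.mem_span_singleton_self ((p : PowerSeries ℤ_[p]) * PowerSeries.X))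
    rw [map_mul, map_natCast] at h
    exact h
  have hpow : ∀ k : ℕ, ((p : ℕ) : PadicSeriesQuot p) ^ (k + 1) * x = 0 := by
    intro k
    rw [pow_succ, mul_assoc, hpx, mul_zero]
  have hppx : ((p : ℕ) : PadicSeriesQuot p) ^ p * x = 0 := by
    have := hpow (p - 1); rwa [← e1] at this
  have hpm1x : ((p : ℕ) : PadicSeriesQuot p) ^ (p - 1) * x = 0 := by
    have := hpow (p - 2); rwa [← e2] at this
  have h2 : ((p : ℕ) : PadicSeriesQuot p) ^ p * δ x +
      x ^ p * δ ((p : ℕ) : PadicSeriesQuot p) +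
      ((p : ℕ) : PadicSeriesQuot p) * δ ((p : ℕ) : PadicSeriesQuot p) * δ x = 0 := by
    have := hmul ((p : ℕ) : PadicSeriesQuot p) x
    rw [hpx, h0] at this
    exact this.symm
  -- Step 4: deduce x^(p+1) = 0.
  have hxp1 : x ^ (p + 1) = 0 := by
    linear_combination x * h2 - x ^ (p + 1) * hcR + x ^ p * hpm1x - δ x * hppx -
      δ ((p : ℕ) : PadicSeriesQuot p) * δ x * hpx
  -- Step 5: contradiction in the power series ring.
  have hX : (PowerSeries.X : PowerSeries ℤ_[p]) ^ (p + 1) ∈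
      Ideal.span {(p : PowerSeries ℤ_[p]) * PowerSeries.X} := by
    rw [← Ideal.Quotient.eq_zero_iff_mem, map_pow]
    exact hxp1
  obtain ⟨g, hg⟩ := Ideal.mem_span_singleton'.mp hX
  have hg' : (PowerSeries.C (p : ℤ_[p])) * (g * PowerSeries.X) =
      (PowerSeries.X : PowerSeries ℤ_[p]) ^ (p + 1) := by
    rw [← hg, map_natCast]
    ring
  have hco := congrArg (PowerSeries.coeff (R := ℤ_[p]) (p + 1)) hg'
  rw [PowerSeries.coeff_C_mul, PowerSeries.coeff_succ_mul_X, PowerSeries.coeff_X_pow] at hco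
  simp only [if_pos rfl] at hco
  have hunit : IsUnit ((p : ℤ_[p])) := IsUnit.of_mul_eq_one _ hco
  have hnorm := PadicInt.isUnit_iff.mp hunit
  rw [PadicInt.norm_p] at hnorm
  have hp1 : (p : ℝ) = 1 := inv_eq_one.mp hnorm
  have : (2 : ℝ) ≤ (p : ℝ) := by exact_mod_cast hp.out.two_le
  linarith
end

section
/- Let A be an integral domain and x ∈ A a nonzero element. If the quotient A/xA is reduced and the localization A[1/x] is integrally closed in its fraction field, then A is integrally closed in its fraction field. -/
open Polynomial

lemma scaleRoots_map_quotient_aux {A : Type*} [CommRing A] [IsDomain A]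
    (x : A) (p : A[X]) (hp : p.Monic) :
    (p.scaleRoots x).map (Ideal.Quotient.mk (Ideal.span {x})) = X ^ p.natDegree := by
  ext j
  rw [coeff_map, coeff_X_pow]
  rcases lt_trichotomy j p.natDegree with hj | hj | hj
  · rw [Polynomial.coeff_scaleRoots]
    have h0 : (Ideal.Quotient.mk (Ideal.span {x})) (x ^ (p.natDegree - j)) = 0 := by
      rw [Ideal.Quotient.eq_zero_iff_mem]
      exact Ideal.mem_span_singleton.mpr (dvd_pow_self x (by omega))
    rw [map_mul, h0, mul_zero, if_neg (by omega)]
  · subst hj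
    rw [Polynomial.coeff_scaleRoots_natDegree, if_pos rfl]
    simpa using congrArg (Ideal.Quotient.mk (Ideal.span {x})) hp.leadingCoeff
  · rw [Polynomial.coeff_scaleRoots,
      Polynomial.coeff_eq_zero_of_natDegree_lt (by omega : p.natDegree < j),
      zero_mul, map_zero, if_neg (by omega)]

/-- Key step: if `a/x` is integral over `A` and `A/xA` is reduced, then `x ∣ a`. -/
lemma dvd_of_isIntegral_div_aux {A : Type*} [CommRing A] [IsDomain A]
    (x a : A) (hx : x ≠ 0) (hred : IsReduced (A ⧸ Ideal.span {x}))
    (h : IsIntegral A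
      (algebraMap A (FractionRing A) a / algebraMap A (FractionRing A) x)) : x ∣ a := by
  obtain ⟨p, hp, hpa⟩ := h
  have hxnz : x ∈ nonZeroDivisors A := mem_nonZeroDivisors_of_ne_zero hx
  have h2 := Polynomial.scaleRoots_aeval_eq_zero_of_aeval_div_eq_zero
    (IsFractionRing.injective A (FractionRing A)) hpa hxnz
  rw [Polynomial.aeval_algebraMap_apply] at h2
  have heval : Polynomial.eval a (p.scaleRoots x) = 0 := by
    have := (IsFractionRing.injective A (FractionRing A)) (by simpa using h2 :
      algebraMap A (FractionRing A) (Polynomial.aeval a (p.scaleRoots x))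
        = algebraMap A (FractionRing A) 0)
    simpa using this
  have hm1 : 1 ≤ p.natDegree := by
    by_contra hc
    have h0 : p.natDegree = 0 := by omega
    have hp1 : p = 1 := hp.natDegree_eq_zero.mp h0
    rw [hp1] at hpa
    simp at hpa
  set f := Ideal.Quotient.mk (Ideal.span {x}) with hf
  have hnil : (f a) ^ p.natDegree = 0 := by
    calc (f a) ^ p.natDegree
        = Polynomial.eval (f a) (X ^ p.natDegree : (A ⧸ Ideal.span {x})[X]) := by simp
      _ = Polynomial.eval (f a) ((p.scaleRoots x).map f) := by
          rw [scaleRoots_map_quotient_aux x p hp]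
      _ = f (Polynomial.eval a (p.scaleRoots x)) := by
          rw [Polynomial.eval_map, Polynomial.eval₂_hom]
      _ = 0 := by rw [heval, map_zero]
  have hz : f a = 0 := IsReduced.eq_zero _ ⟨p.natDegree, hnil⟩
  rw [hf, Ideal.Quotient.eq_zero_iff_mem, Ideal.mem_span_singleton] at hz
  exact hz

/-- **A normality criterion.**
Let `A` be an integral domain and `x ∈ A` a nonzero element.  If the quotient `A/xA` is
reduced and the localization `A[1/x]` is integrally closed in its fraction field, then `A`
is integrally closed in its fraction field. -/
theorem isIntegrallyClosed_of_quotient_reduced_of_away {A : Type*} [CommRing A] [IsDomain A]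
    (x : A) (hx : x ≠ 0)
    (hred : IsReduced (A ⧸ Ideal.span {x}))
    (hic : IsIntegrallyClosed (Localization.Away x)) :
    IsIntegrallyClosed A := by
  set K := FractionRing A
  set B := Localization.Away x
  have hle : Submonoid.powers x ≤ nonZeroDivisors A :=
    powers_le_nonZeroDivisors_of_noZeroDivisors hx
  letI : Algebra B K :=
    IsLocalization.localizationAlgebraOfSubmonoidLe _ _ (Submonoid.powers x)
      (nonZeroDivisors A) hle
  haveI : IsScalarTower A B K :=
    IsLocalization.localization_isScalarTower_of_submonoid_le B K (Submonoid.powers x)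
      (nonZeroDivisors A) hle
  haveI : IsFractionRing B K :=
    IsFractionRing.isFractionRing_of_isLocalization (Submonoid.powers x) B K hle
  rw [isIntegrallyClosed_iff K]
  intro y hy
  set i := algebraMap A K with hi
  have hix : i x ≠ 0 := by
    simpa using (map_ne_zero_of_mem_nonZeroDivisors i
      (IsFractionRing.injective A K) (mem_nonZeroDivisors_of_ne_zero hx))
  -- key claim
  have key : ∀ n : ℕ, ∀ a : A, IsIntegral A (i a / (i x) ^ n) →
      ∃ b : A, i b = i a / (i x) ^ n := by
    intro n
    induction n with
    | zero => intro a _; exact ⟨a, by simp⟩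
    | succ n ih =>
      intro a ha
      have hdiv : i a / i x = (i a / (i x) ^ (n + 1)) * i (x ^ n) := by
        rw [map_pow]
        have hfs : i x ^ n ≠ 0 := pow_ne_zero _ hix
        rw [pow_succ, ← div_div, div_mul_eq_mul_div, div_mul_cancel₀ _ hfs]
      have hint : IsIntegral A (i a / i x) := by
        rw [hdiv]
        exact ha.mul (isIntegral_algebraMap)
      obtain ⟨b, rfl⟩ := dvd_of_isIntegral_div_aux x a hx hred hint
      have heq : i (x * b) / (i x) ^ (n + 1) = i b / (i x) ^ n := by
        rw [map_mul, pow_succ']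
        exact mul_div_mul_left (G₀ := FractionRing A) _ _ hix
      rw [heq] at ha ⊢
      exact ih b ha
  -- express y as i a / (i x)^n
  have hyB : IsIntegral B y := hy.tower_top
  obtain ⟨z, hz⟩ := IsIntegrallyClosed.isIntegral_iff.mp hyB
  obtain ⟨⟨a, s⟩, e⟩ := IsLocalization.surj (Submonoid.powers x) z
  obtain ⟨n, hn⟩ := s.2
  have e2 : y * (i x) ^ n = i a := by
    have h3 := congrArg (algebraMap B K) e
    rw [map_mul, hz, ← IsScalarTower.algebraMap_apply, ← IsScalarTower.algebraMap_apply] at h3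
    simpa only [← hn, map_pow] using h3
  have hy' : y = i a / (i x) ^ n := by
    rw [← e2]
    exact (mul_div_cancel_right₀ y (pow_ne_zero n hix)).symm
  rw [hy'] at hy ⊢
  exact key n a hy
end
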